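/- Let k be a field of characteristic ≠ 2 and let F = k(t,u) = k(x,y) be a hyperelliptic function field, where u² = D_t(t) and y² = D_x(x) for monic separable polynomials D_t ∈ k[t] and D_x ∈ k[x]. Suppose x = (α₀t + α₁)/(α₂t + α₃) with α_i ∈ k, α₀α₃ − α₁α₂ ≠ 0, and y = φ·u with φ ∈ k(t)∖{0}. If x ∈ k[t], then φ ∈ k∖{0}. -/
import Mathlib


open Polynomial

/-- In a hyperelliptic function field `k(t,u) = k(x,y)` with
`x = (α₀t+α₁)/(α₂t+α₃)` and `y = φu`, `φ ∈ k(t)∖{0}`: if `x ∈ k[t]` then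
`φ ∈ k∖{0}`. -/
theorem stmt18 (k F : Type*) [Field k] [Field F] [Algebra k F]
    (hchar : ringChar k ≠ 2)
    (g : ℕ) (hg : 1 < g)
    (t u x y : F) (Dt Dx : Polynomial k)
    (hDtm : Dt.Monic) (hDts : Dt.Separable)
    (hDtdeg : Dt.natDegree = 2 * g + 1 ∨ Dt.natDegree = 2 * g + 2)
    (hDxm : Dx.Monic) (hDxs : Dx.Separable)
    (hDxdeg : Dx.natDegree = 2 * g + 1 ∨ Dx.natDegree = 2 * g + 2)
    (htr : Transcendental k t) (hxtr : Transcendental k x)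
    (hu : u ^ 2 = Polynomial.aeval t Dt) (hy : y ^ 2 = Polynomial.aeval x Dx)
    (hFtu : IntermediateField.adjoin k {t, u} = ⊤)
    (hFxy : IntermediateField.adjoin k {x, y} = ⊤)
    (α₀ α₁ α₂ α₃ : k) (hdet : α₀ * α₃ - α₁ * α₂ ≠ 0)
    (hxeq : x = (algebraMap k F α₀ * t + algebraMap k F α₁) /
      (algebraMap k F α₂ * t + algebraMap k F α₃))
    (φ : F) (hφmem : φ ∈ IntermediateField.adjoin k ({t} : Set F)) (hφ0 : φ ≠ 0)
    (hyφ : y = φ * u)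
    (hxkt : x ∈ Algebra.adjoin k ({t} : Set F)) :
    ∃ c : k, c ≠ 0 ∧ φ = algebraMap k F c := by
  classical
  have hinj : Function.Injective (aeval t : k[X] →ₐ[k] F) :=
    transcendental_iff_injective.mp htr
  -- Step 1: α₂ = 0
  have hα2 : α₂ = 0 := by
    by_contra hα2
    rw [Algebra.adjoin_singleton_eq_range_aeval] at hxkt
    obtain ⟨p, hp⟩ := hxkt
    have hlin0 : (C α₂ * X + C α₃ : k[X]) ≠ 0 := fun h0 => by
      have := congrArg (fun q => Polynomial.coeff q 1) h0
      simp at this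
      exact hα2 this
    have hden : algebraMap k F α₂ * t + algebraMap k F α₃ ≠ 0 := by
      intro h
      exact htr ⟨C α₂ * X + C α₃, hlin0, by simpa using h⟩
    have hp' : aeval t p = x := hp
    have hpoly : p * (C α₂ * X + C α₃) = C α₀ * X + C α₁ := by
      apply hinj
      simp only [map_mul, map_add, aeval_C, aeval_X]
      rw [hp', hxeq, div_mul_cancel₀ _ hden]
    have hp0 : p ≠ 0 := by
      intro h0
      rw [h0, map_zero] at hp'
      exact hxtr (hp' ▸ isAlgebraic_zero)
    have hdeg : p.natDegree + 1 ≤ 1 := by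
      calc p.natDegree + 1 = p.natDegree + (C α₂ * X + C α₃).natDegree := by
            rw [natDegree_linear hα2]
        _ = (p * (C α₂ * X + C α₃)).natDegree := (natDegree_mul hp0 hlin0).symm
        _ = (C α₀ * X + C α₁ : k[X]).natDegree := by rw [hpoly]
        _ ≤ 1 := natDegree_linear_le
    have hpdeg : p.natDegree = 0 := by omega
    have hpc := eq_C_of_natDegree_eq_zero hpdeg
    rw [hpc, aeval_C] at hp'
    exact hxtr (hp' ▸ isAlgebraic_algebraMap _)
  have hα3 : α₃ ≠ 0 := by
    intro h; apply hdet; rw [hα2, h]; ring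
  have hα0 : α₀ ≠ 0 := by
    intro h; apply hdet; rw [hα2, h]; ring
  set a : k := α₀ * α₃⁻¹ with ha_def
  set b : k := α₁ * α₃⁻¹ with hb_def
  have ha0 : a ≠ 0 := mul_ne_zero hα0 (inv_ne_zero hα3)
  have hα3F : algebraMap k F α₃ ≠ 0 := fun h =>
    hα3 ((algebraMap k F).injective (by simpa using h))
  have hx2 : x = algebraMap k F a * t + algebraMap k F b := by
    rw [hxeq, hα2]
    simp only [map_zero, zero_mul, zero_add, ha_def, hb_def, map_mul, map_inv₀]
    field_simp
  -- the linear substitution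
  set ℓ : k[X] := C a * X + C b with hℓ_def
  set E : k[X] := Dx.comp ℓ with hE_def
  have haevalℓ : aeval t ℓ = x := by
    rw [hx2]; simp [hℓ_def, Algebra.smul_def]
  have hE : aeval t E = aeval x Dx := by
    rw [hE_def, aeval_comp, haevalℓ]
  -- separability of E
  have hEsep : E.Separable := by
    have hmap : IsCoprime (Dx.comp ℓ) ((derivative Dx).comp ℓ) := by
      have h := IsCoprime.map (hDxs : IsCoprime Dx (derivative Dx))
        ((aeval ℓ : k[X] →ₐ[k] k[X]) : k[X] →+* k[X])
      simpa only [AlgHom.coe_toRingHom, comp_eq_aeval] using h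
    have hderℓ : derivative ℓ = C a := by
      rw [hℓ_def]; simp
    have hderiv : derivative E = C a * (derivative Dx).comp ℓ := by
      rw [hE_def, derivative_comp, hderℓ]
    rw [Polynomial.Separable, hderiv]
    exact (isCoprime_mul_unit_left_right (isUnit_C.2 (isUnit_iff_ne_zero.2 ha0)) _ _).mpr hmap
  -- main relation
  have hDt0 : aeval t Dt ≠ 0 := fun h => hDtm.ne_zero (hinj (by simpa using h))
  have heq : φ ^ 2 * aeval t Dt = aeval t E := by
    rw [hE, ← hy, hyφ, mul_pow, hu]
  -- φ as a ratio of polynomials in t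
  obtain ⟨P, Q, hPQ⟩ := (IntermediateField.mem_adjoin_simple_iff k φ).mp hφmem
  have hQt : aeval t Q ≠ 0 := by
    intro h; rw [h, div_zero] at hPQ; exact hφ0 hPQ
  have hQ0 : Q ≠ 0 := fun h => hQt (by rw [h]; simp)
  have hPt : aeval t P = φ * aeval t Q := by
    rw [hPQ, div_mul_cancel₀ _ hQt]
  have hP0 : P ≠ 0 := by
    intro h
    rw [h, map_zero] at hPt
    exact mul_ne_zero hφ0 hQt hPt.symm
  have hpoly : P ^ 2 * Dt = Q ^ 2 * E := by
    apply hinj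
    simp only [map_mul, map_pow, hPt]
    linear_combination (aeval t Q) ^ 2 * heq
  -- reduce to lowest terms
  set d : k[X] := GCDMonoid.gcd P Q with hd_def
  set P' : k[X] := P / d with hP'_def
  set Q' : k[X] := Q / d with hQ'_def
  have hd0 : d ≠ 0 := gcd_ne_zero_of_right hQ0
  have hcop : IsCoprime P' Q' := isCoprime_div_gcd_div_gcd hQ0
  have hdP : d * P' = P := EuclideanDomain.mul_div_cancel' hd0 (gcd_dvd_left P Q)
  have hdQ : d * Q' = Q := EuclideanDomain.mul_div_cancel' hd0 (gcd_dvd_right P Q)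
  have hpoly' : P' ^ 2 * Dt = Q' ^ 2 * E := by
    have h2 : d ^ 2 * (P' ^ 2 * Dt) = d ^ 2 * (Q' ^ 2 * E) := by
      rw [← hdP, ← hdQ] at hpoly
      ring_nf at hpoly ⊢
      linear_combination hpoly
    exact mul_left_cancel₀ (pow_ne_zero 2 hd0) h2
  have hP'0 : P' ≠ 0 := fun h => hP0 (by rw [← hdP, h, mul_zero])
  have hQ'0 : Q' ≠ 0 := fun h => hQ0 (by rw [← hdQ, h, mul_zero])
  -- Q' is a unit
  have hQ'unit : IsUnit Q' := by
    have hdvd : Q' ^ 2 ∣ Dt := by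
      refine (hcop.symm.pow (m := 2) (n := 2)).dvd_of_dvd_mul_left ?_
      exact ⟨E, hpoly'⟩
    exact hDts.squarefree Q' (by rwa [← sq])
  have hP'unit : IsUnit P' := by
    have hdvd : P' ^ 2 ∣ E := by
      refine (hcop.pow (m := 2) (n := 2)).dvd_of_dvd_mul_left ?_
      exact ⟨Dt, hpoly'.symm⟩
    exact hEsep.squarefree P' (by rwa [← sq])
  obtain ⟨cp, hcpu, hcp⟩ := Polynomial.isUnit_iff.mp hP'unit
  obtain ⟨cq, hcqu, hcq⟩ := Polynomial.isUnit_iff.mp hQ'unit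
  have hcq0 : cq ≠ 0 := hcqu.ne_zero
  refine ⟨cp * cq⁻¹, mul_ne_zero hcpu.ne_zero (inv_ne_zero hcq0), ?_⟩
  have hdt0 : aeval t d ≠ 0 := fun h => hd0 (hinj (by simpa using h))
  rw [hPQ, ← hdP, ← hdQ, ← hcp, ← hcq]
  simp only [map_mul, aeval_C]
  rw [mul_div_mul_left _ _ hdt0, map_inv₀, div_eq_mul_inv]
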